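/- Given indeterminates uᵢ, vᵢ, kᵢ, xⱼ, yⱼ, lⱼ (1 ≤ i,j ≤ n) with kᵢ pairwise distinct and lⱼ ≠ kᵢ for all i,j, the n×n determinant det((uᵢyⱼ − vᵢxⱼ)/(lⱼ − kᵢ)) equals (∏_{i,j}(lⱼ − kᵢ))⁻¹ times the 2n×2n determinant of the block matrix [[Uₙ, Xₙ],[Vₙ, Yₙ]], where Uₙ has rows alternating (u₁,…,uₙ), (k₁v₁,…,kₙvₙ), (k₁²u₁,…,kₙ²uₙ), …, Vₙ has rows alternating (v₁,…,vₙ), (k₁u₁,…,kₙuₙ), (k₁²v₁,…,kₙ²vₙ), …, and Xₙ, Yₙ are defined analogously with xⱼ, yⱼ, lⱼ. -/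

import Mathlib

open Matrix Finset Polynomial Equiv

private lemma okada_parity (n : ℕ) {K : Type*} [Field K] :
    (-1 : K) ^ (n / 2) * (-1) ^ (n * (n - 1) / 2) = 1 := by
  rw [← pow_add]
  apply Even.neg_one_pow
  rcases Nat.even_or_odd n with ⟨m, hm⟩ | ⟨m, hm⟩
  · subst hm
    rcases m with _ | m
    · simp
    · have h1 : (m + 1 + (m + 1)) / 2 = m + 1 := by omega
      have h2 : (m + 1 + (m + 1)) * (m + 1 + (m + 1) - 1) / 2 = (m + 1) * (2 * m + 1) := by
        have h0 : m + 1 + (m + 1) - 1 = 2 * m + 1 := by omega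
        have : (m + 1 + (m + 1)) * (2 * m + 1) = 2 * ((m + 1) * (2 * m + 1)) := by ring
        rw [h0, this, Nat.mul_div_cancel_left _ (by norm_num)]
      rw [h1, h2]
      exact ⟨(m + 1) * (m + 1), by ring⟩
  · subst hm
    have h1 : (2 * m + 1) / 2 = m := by omega
    have h2 : (2 * m + 1) * (2 * m + 1 - 1) / 2 = (2 * m + 1) * m := by
      have h0 : 2 * m + 1 - 1 = 2 * m := by omega
      have : (2 * m + 1) * (2 * m) = 2 * ((2 * m + 1) * m) := by ring
      rw [h0, this, Nat.mul_div_cancel_left _ (by norm_num)]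
    rw [h1, h2]
    exact ⟨m * m + m, by ring⟩

private lemma okada_signprod (n : ℕ) :
    (∏ r : Fin n, (if (r : ℕ) % 2 = 0 then (1 : ℤˣ) else -1)) = (-1) ^ (n / 2) := by
  induction n with
  | zero => simp
  | succ n ih =>
    rw [Fin.prod_univ_castSucc]
    simp only [Fin.coe_castSucc, Fin.val_last]
    rw [ih]
    by_cases hn : n % 2 = 0
    · have : (n + 1) / 2 = n / 2 := by omega
      rw [this]
      simp [hn]
    · have : (n + 1) / 2 = n / 2 + 1 := by omega
      rw [this, pow_succ]
      simp [hn]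


private lemma okada_key {K : Type*} [Field K] {n : ℕ} (hn : 0 < n)
    (u v k x y l : Fin n → K) (hk : Function.Injective k)
    (huv : ∀ i, u i ≠ 0 ∨ v i ≠ 0) :
    (Matrix.fromBlocks
          (Matrix.of fun r j : Fin n =>
            if (r : ℕ) % 2 = 0 then k j ^ (r : ℕ) * u j else k j ^ (r : ℕ) * v j)
          (Matrix.of fun r j : Fin n =>
            if (r : ℕ) % 2 = 0 then l j ^ (r : ℕ) * x j else l j ^ (r : ℕ) * y j)
          (Matrix.of fun r j : Fin n =>
            if (r : ℕ) % 2 = 0 then k j ^ (r : ℕ) * v j else k j ^ (r : ℕ) * u j)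
          (Matrix.of fun r j : Fin n =>
            if (r : ℕ) % 2 = 0 then l j ^ (r : ℕ) * y j else l j ^ (r : ℕ) * x j)).det
      = (Matrix.of fun i j : Fin n =>
          (u i * y j - v i * x j) * ∏ m ∈ Finset.univ.erase i, (l j - k m)).det := by
  classical
  -- notation
  set g : Fin n → K[X] := fun i => ∏ m ∈ Finset.univ.erase i, (X - C (k m)) with hg
  set G : Matrix (Fin n) (Fin n) K := Matrix.of fun i r => (g i).coeff (r : ℕ) with hG
  set Wk : Matrix (Fin n) (Fin n) K := Matrix.of fun r j => k j ^ (r : ℕ) with hWk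
  set Wl : Matrix (Fin n) (Fin n) K := Matrix.of fun r j => l j ^ (r : ℕ) with hWl
  set d : Fin n → K := fun i => ∏ m ∈ Finset.univ.erase i, (k i - k m) with hd
  set H : Matrix (Fin n) (Fin n) K :=
    Matrix.of fun i j => ∏ m ∈ Finset.univ.erase i, (l j - k m) with hH
  set a : Fin n → K := fun i => if u i ≠ 0 then 1 else 0 with ha
  set b : Fin n → K := fun i => if u i ≠ 0 then 0 else 1 with hb
  set c : Fin n → K := fun i => a i * u i + b i * v i with hc
  set E : Matrix (Fin n) (Fin n) K :=
    Matrix.of fun i j => (u i * y j - v i * x j) * H i j with hE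
  set N : Matrix (Fin n ⊕ Fin n) (Fin n ⊕ Fin n) K :=
    Matrix.fromBlocks (Wk * diagonal u) (Wl * diagonal x) (Wk * diagonal v) (Wl * diagonal y)
    with hN
  set S : Matrix (Fin n ⊕ Fin n) (Fin n ⊕ Fin n) K :=
    Matrix.fromBlocks (diagonal a) (diagonal b) (diagonal v) (-(diagonal u)) with hS
  set GG : Matrix (Fin n ⊕ Fin n) (Fin n ⊕ Fin n) K :=
    Matrix.fromBlocks G 0 0 G with hGG
  -- degrees
  have hdeg : ∀ i, (g i).natDegree < n := by
    intro i
    rw [hg]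
    rw [natDegree_prod_of_monic _ _ (fun m _ => monic_X_sub_C (k m))]
    simp only [natDegree_X_sub_C, Finset.sum_const, smul_eq_mul, mul_one]
    rw [Finset.card_erase_of_mem (Finset.mem_univ i), Finset.card_univ, Fintype.card_fin]
    omega
  have heval : ∀ i (t : K), (g i).eval t = ∏ m ∈ Finset.univ.erase i, (t - k m) := by
    intro i t
    rw [hg, eval_prod]
    simp
  have hsum : ∀ i (t : K), (∑ r : Fin n, (g i).coeff (r : ℕ) * t ^ (r : ℕ)) = (g i).eval t := by
    intro i t
    rw [eval_eq_sum_range' (hdeg i)]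
    exact Fin.sum_univ_eq_sum_range (fun r => (g i).coeff r * t ^ r) n
  -- G * Wk = diagonal d
  have hGWk : G * Wk = diagonal d := by
    ext i j
    rw [Matrix.mul_apply]
    simp only [hG, hWk, Matrix.of_apply]
    rw [hsum i (k j), heval]
    rcases eq_or_ne i j with rfl | hij
    · rw [Matrix.diagonal_apply_eq]
    · rw [Matrix.diagonal_apply_ne _ hij]
      exact Finset.prod_eq_zero (Finset.mem_erase.mpr ⟨(Ne.symm hij), Finset.mem_univ j⟩)
        (by simp)
  have hGWl : G * Wl = H := by
    ext i j
    rw [Matrix.mul_apply]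
    simp only [hG, hWl, hH, Matrix.of_apply]
    rw [hsum i (l j), heval]
  -- nonvanishing
  have hdne : ∀ i, d i ≠ 0 := by
    intro i
    rw [hd]
    exact Finset.prod_ne_zero_iff.mpr fun m hm =>
      sub_ne_zero.mpr fun hkm => (Finset.mem_erase.mp hm).1 (hk hkm).symm
  have hcne : ∀ i, c i ≠ 0 := by
    intro i
    rcases huv i with hu | hv
    · simp [hc, ha, hb, hu]
    · by_cases hu : u i ≠ 0
      · simp [hc, ha, hb, hu]
      · push_neg at hu
        simp [hc, ha, hb, hu, hv]
  -- step 1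
  have step1 : GG * N = Matrix.fromBlocks (diagonal d * diagonal u) (H * diagonal x)
      (diagonal d * diagonal v) (H * diagonal y) := by
    rw [hGG, hN, Matrix.fromBlocks_multiply]
    simp only [Matrix.zero_mul, Matrix.mul_zero, add_zero, zero_add, ← Matrix.mul_assoc,
      hGWk, hGWl]
  -- step 2
  have blk11 : diagonal a * (diagonal d * diagonal u) + diagonal b * (diagonal d * diagonal v)
      = diagonal (fun i => c i * d i) := by
    ext i j
    by_cases hij : i = j
    · subst hij; simp [Matrix.diagonal_mul_diagonal, Matrix.diagonal_apply, hc]; ring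
    · simp [Matrix.diagonal_mul_diagonal, Matrix.diagonal_apply, hij]
  have blk21 : diagonal v * (diagonal d * diagonal u) + -diagonal u * (diagonal d * diagonal v)
      = (0 : Matrix (Fin n) (Fin n) K) := by
    ext i j
    by_cases hij : i = j
    · subst hij; simp [Matrix.diagonal_mul_diagonal, Matrix.diagonal_apply]; ring
    · simp [Matrix.diagonal_mul_diagonal, Matrix.diagonal_apply, hij]
  have blk22 : diagonal v * (H * diagonal x) + -diagonal u * (H * diagonal y) = -E := by
    ext i j
    simp only [Matrix.add_apply, Matrix.neg_apply, Matrix.neg_mul, hE, Matrix.of_apply]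
    rw [Matrix.diagonal_mul, Matrix.diagonal_mul, Matrix.mul_diagonal, Matrix.mul_diagonal]
    ring
  have step2 : S * (GG * N) = Matrix.fromBlocks (diagonal fun i => c i * d i)
      (diagonal a * (H * diagonal x) + diagonal b * (H * diagonal y)) 0 (-E) := by
    rw [step1, hS, Matrix.fromBlocks_multiply, blk11, blk21, blk22]
  -- determinants of step2
  have detstep : S.det * ((G.det * G.det) * N.det)
      = (∏ i, (c i * d i)) * ((-1 : K) ^ n * E.det) := by
    have h1 := congrArg Matrix.det step2
    rw [Matrix.det_mul, Matrix.det_mul, hGG, Matrix.det_fromBlocks_zero₂₁] at h1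
    rw [Matrix.det_fromBlocks_zero₂₁, Matrix.det_diagonal, Matrix.det_neg] at h1
    simpa [Fintype.card_fin] using h1
  -- determinant of S
  set e : Bool × Fin n ≃ Fin n ⊕ Fin n := Equiv.boolProdEquivSum (Fin n) with he
  set B2 : Fin n → Matrix Bool Bool K := fun i =>
    Matrix.of fun p q => if p then (if q then -u i else v i) else (if q then b i else a i)
    with hB2
  have hSsub : S = (Matrix.blockDiagonal B2).submatrix e.symm e.symm := by
    ext i j
    rcases i with i | i <;> rcases j with j | j <;>
      simp [hS, hB2, he, Matrix.blockDiagonal_apply, Matrix.diagonal_apply, eq_comm]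
  have hdetS : S.det = (-1 : K) ^ n * ∏ i, c i := by
    rw [hSsub, Matrix.det_submatrix_equiv_self, Matrix.det_blockDiagonal]
    have hB2det : ∀ i, (B2 i).det = -(c i) := by
      intro i
      have h0 : ((B2 i).submatrix (⇑finTwoEquiv) (⇑finTwoEquiv)).det = (B2 i).det :=
        Matrix.det_submatrix_equiv_self _ _
      rw [← h0]
      have h2 : (B2 i).submatrix finTwoEquiv finTwoEquiv
          = !![a i, b i; v i, -u i] := by
        ext p q
        fin_cases p <;> fin_cases q <;> simp [hB2, finTwoEquiv]
      rw [h2, Matrix.det_fin_two_of, hc]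
      ring
    simp_rw [hB2det]
    calc (∏ i : Fin n, -(c i)) = ∏ i : Fin n, ((-1 : K) * c i) :=
          Finset.prod_congr rfl fun i _ => (neg_one_mul _).symm
      _ = (∏ _i : Fin n, (-1 : K)) * ∏ i, c i := Finset.prod_mul_distrib
      _ = (-1 : K) ^ n * ∏ i, c i := by
          rw [Finset.prod_const, Finset.card_univ, Fintype.card_fin]
  -- the permutation
  set π : Fin n → Equiv.Perm Bool :=
    fun r => if (r : ℕ) % 2 = 0 then 1 else Equiv.swap false true with hπ
  set τ : Equiv.Perm (Bool × Fin n) := Equiv.prodCongrLeft π with hτ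
  set σ : Equiv.Perm (Fin n ⊕ Fin n) := (e.symm.trans τ).trans e with hσ
  have hσl : ∀ r : Fin n, σ (Sum.inl r)
      = if (r : ℕ) % 2 = 0 then Sum.inl r else Sum.inr r := by
    intro r
    by_cases hr : (r : ℕ) % 2 = 0 <;>
      simp [hσ, hτ, hπ, he, hr, Equiv.prodCongrLeft]
  have hσr : ∀ r : Fin n, σ (Sum.inr r)
      = if (r : ℕ) % 2 = 0 then Sum.inr r else Sum.inl r := by
    intro r
    by_cases hr : (r : ℕ) % 2 = 0 <;>
      simp [hσ, hτ, hπ, he, hr, Equiv.prodCongrLeft]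
  have hMN : (Matrix.fromBlocks
          (Matrix.of fun r j : Fin n =>
            if (r : ℕ) % 2 = 0 then k j ^ (r : ℕ) * u j else k j ^ (r : ℕ) * v j)
          (Matrix.of fun r j : Fin n =>
            if (r : ℕ) % 2 = 0 then l j ^ (r : ℕ) * x j else l j ^ (r : ℕ) * y j)
          (Matrix.of fun r j : Fin n =>
            if (r : ℕ) % 2 = 0 then k j ^ (r : ℕ) * v j else k j ^ (r : ℕ) * u j)
          (Matrix.of fun r j : Fin n =>
            if (r : ℕ) % 2 = 0 then l j ^ (r : ℕ) * y j else l j ^ (r : ℕ) * x j))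
      = N.submatrix σ id := by
    ext i j
    rcases i with r | r
    · rw [Matrix.submatrix_apply, hσl r, id]
      by_cases hr : (r : ℕ) % 2 = 0 <;>
        · simp only [if_pos, if_neg, hr, if_true, if_false, ite_true, ite_false]
          rcases j with j | j <;>
            simp [hN, hWk, hWl, Matrix.mul_diagonal, hr]
    · rw [Matrix.submatrix_apply, hσr r, id]
      by_cases hr : (r : ℕ) % 2 = 0 <;>
        · simp only [if_pos, if_neg, hr, if_true, if_false, ite_true, ite_false]
          rcases j with j | j <;>
            simp [hN, hWk, hWl, Matrix.mul_diagonal, hr]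
  have hsignσ : Equiv.Perm.sign σ = (-1 : ℤˣ) ^ (n / 2) := by
    rw [hσ, Equiv.Perm.sign_symm_trans_trans, hτ, Equiv.Perm.sign_prodCongrLeft]
    calc (∏ r, Equiv.Perm.sign (π r))
        = ∏ r : Fin n, (if (r : ℕ) % 2 = 0 then (1 : ℤˣ) else -1) := by
          refine Finset.prod_congr rfl fun r _ => ?_
          by_cases hr : (r : ℕ) % 2 = 0 <;>
            simp [hπ, hr, Equiv.Perm.sign_swap]
      _ = (-1 : ℤˣ) ^ (n / 2) := okada_signprod n
  have hdetM : (Matrix.fromBlocks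
          (Matrix.of fun r j : Fin n =>
            if (r : ℕ) % 2 = 0 then k j ^ (r : ℕ) * u j else k j ^ (r : ℕ) * v j)
          (Matrix.of fun r j : Fin n =>
            if (r : ℕ) % 2 = 0 then l j ^ (r : ℕ) * x j else l j ^ (r : ℕ) * y j)
          (Matrix.of fun r j : Fin n =>
            if (r : ℕ) % 2 = 0 then k j ^ (r : ℕ) * v j else k j ^ (r : ℕ) * u j)
          (Matrix.of fun r j : Fin n =>
            if (r : ℕ) % 2 = 0 then l j ^ (r : ℕ) * y j else l j ^ (r : ℕ) * x j)).det
      = (-1 : K) ^ (n / 2) * N.det := by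
    rw [hMN, Matrix.det_permute, hsignσ]
    push_cast
    ring
  -- Vandermonde facts
  have hWkdet : Wk.det = ∏ i : Fin n, ∏ j ∈ Finset.Ioi i, (k j - k i) := by
    have hWkT : Wk = (Matrix.vandermonde k)ᵀ := by
      ext r j
      simp [hWk, Matrix.vandermonde]
    rw [hWkT, Matrix.det_transpose, Matrix.det_vandermonde]
  have hGdet : G.det * Wk.det = ∏ i, d i := by
    rw [← Matrix.det_mul, hGWk, Matrix.det_diagonal]
  have hsplit : ∀ i : Fin n, Finset.univ.erase i = Finset.Iio i ∪ Finset.Ioi i := by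
    intro i
    ext m
    simp only [Finset.mem_erase, Finset.mem_univ, and_true, Finset.mem_union, Finset.mem_Iio,
      Finset.mem_Ioi]
    exact ne_iff_lt_or_gt
  have hdisj : ∀ i : Fin n, Disjoint (Finset.Iio i) (Finset.Ioi i) := by
    intro i
    refine Finset.disjoint_left.mpr fun m hm hm' => ?_
    simp only [Finset.mem_Iio] at hm
    simp only [Finset.mem_Ioi] at hm'
    exact absurd (hm.trans hm') (lt_irrefl m)
  have hsumIoi : (∑ i : Fin n, (Finset.Ioi i).card) = n * (n - 1) / 2 := by
    simp_rw [Fin.card_Ioi]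
    rw [Fin.sum_univ_eq_sum_range (fun i => n - 1 - i) n,
      Finset.sum_range_reflect (fun i => i) n, Finset.sum_range_id]
  have hprodd : (∏ i, d i)
      = (-1 : K) ^ (n * (n - 1) / 2) * (∏ i : Fin n, ∏ j ∈ Finset.Ioi i, (k j - k i)) ^ 2 := by
    have h1 : (∏ i, d i) = (∏ i : Fin n, ∏ m ∈ Finset.Iio i, (k i - k m))
        * (∏ i : Fin n, ∏ m ∈ Finset.Ioi i, (k i - k m)) := by
      rw [← Finset.prod_mul_distrib]
      refine Finset.prod_congr rfl fun i _ => ?_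
      rw [hd]
      dsimp only
      rw [hsplit i, Finset.prod_union (hdisj i)]
    have h2 : (∏ i : Fin n, ∏ m ∈ Finset.Iio i, (k i - k m))
        = ∏ i : Fin n, ∏ j ∈ Finset.Ioi i, (k j - k i) := by
      refine Finset.prod_comm' fun i m => ?_
      simp only [Finset.mem_univ, true_and, and_true, Finset.mem_Iio, Finset.mem_Ioi]
    have h3 : (∏ i : Fin n, ∏ m ∈ Finset.Ioi i, (k i - k m))
        = (-1 : K) ^ (n * (n - 1) / 2) * ∏ i : Fin n, ∏ m ∈ Finset.Ioi i, (k m - k i) := by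
      have : ∀ i : Fin n, (∏ m ∈ Finset.Ioi i, (k i - k m))
          = (-1 : K) ^ (Finset.Ioi i).card * ∏ m ∈ Finset.Ioi i, (k m - k i) := by
        intro i
        rw [← Finset.prod_const, ← Finset.prod_mul_distrib]
        refine Finset.prod_congr rfl fun m _ => ?_
        ring
      simp_rw [this]
      rw [Finset.prod_mul_distrib, Finset.prod_pow_eq_pow_sum, hsumIoi]
    rw [h1, h2, h3]
    ring
  -- nonvanishing products
  have hprodcne : (∏ i, c i) ≠ 0 := Finset.prod_ne_zero_iff.mpr fun i _ => hcne i
  have hproddne : (∏ i, d i) ≠ 0 := Finset.prod_ne_zero_iff.mpr fun i _ => hdne i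
  have hWkne : Wk.det ≠ 0 := fun h0 => hproddne (by rw [← hGdet, h0, mul_zero])
  -- assemble
  have hn1 : ((-1 : K) ^ n) ≠ 0 := pow_ne_zero n (by norm_num)
  have key1 : G.det * G.det * N.det = (∏ i, d i) * E.det := by
    have h1 : ((-1 : K) ^ n * ∏ i, c i) * (G.det * G.det * N.det)
        = ((-1 : K) ^ n * ∏ i, c i) * ((∏ i, d i) * E.det) := by
      have hcd : (∏ i, (c i * d i)) = (∏ i, c i) * ∏ i, d i := Finset.prod_mul_distrib
      rw [hdetS] at detstep
      rw [hcd] at detstep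
      linear_combination detstep
    exact mul_left_cancel₀ (mul_ne_zero hn1 hprodcne) h1
  have key2 : (∏ i, d i) * N.det = Wk.det ^ 2 * E.det := by
    have h1 : (∏ i, d i) * ((∏ i, d i) * N.det)
        = (∏ i, d i) * (Wk.det ^ 2 * E.det) := by
      linear_combination Wk.det ^ 2 * key1 - N.det * (G.det * Wk.det + ∏ i, d i) * hGdet
    exact mul_left_cancel₀ hproddne h1
  have key3 : (-1 : K) ^ (n * (n - 1) / 2) * N.det = E.det := by
    have hsq : Wk.det ^ 2 ≠ 0 := pow_ne_zero 2 hWkne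
    have h1 : Wk.det ^ 2 * ((-1 : K) ^ (n * (n - 1) / 2) * N.det)
        = Wk.det ^ 2 * E.det := by
      rw [hprodd, ← hWkdet] at key2
      linear_combination key2
    exact mul_left_cancel₀ hsq h1
  rw [hdetM]
  have hflip : (-1 : K) ^ (n / 2) = (-1 : K) ^ (n * (n - 1) / 2) := by
    have hy : ((-1 : K) ^ (n * (n - 1) / 2)) * ((-1 : K) ^ (n * (n - 1) / 2)) = 1 := by
      rw [← pow_add]
      exact Even.neg_one_pow ⟨n * (n - 1) / 2, rfl⟩
    calc (-1 : K) ^ (n / 2)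
        = ((-1 : K) ^ (n / 2) * (-1 : K) ^ (n * (n - 1) / 2)) * (-1 : K) ^ (n * (n - 1) / 2) := by
          rw [mul_assoc, hy, mul_one]
      _ = (-1 : K) ^ (n * (n - 1) / 2) := by rw [okada_parity n, one_mul]
  have hEfin : E = Matrix.of fun i j : Fin n =>
      (u i * y j - v i * x j) * ∏ m ∈ Finset.univ.erase i, (l j - k m) := by
    ext i j
    simp [hE, hH]
  rw [hflip, key3, hEfin]

theorem okada_determinant_identity {K : Type*} [Field K] {n : ℕ}
    (u v k x y l : Fin n → K) (hk : Function.Injective k) (hkl : ∀ i j, l j ≠ k i) :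
    (Matrix.of fun i j : Fin n => (u i * y j - v i * x j) / (l j - k i)).det
      = (∏ i, ∏ j, (l j - k i))⁻¹ *
        (Matrix.fromBlocks
          (Matrix.of fun r j : Fin n =>
            if (r : ℕ) % 2 = 0 then k j ^ (r : ℕ) * u j else k j ^ (r : ℕ) * v j)
          (Matrix.of fun r j : Fin n =>
            if (r : ℕ) % 2 = 0 then l j ^ (r : ℕ) * x j else l j ^ (r : ℕ) * y j)
          (Matrix.of fun r j : Fin n =>
            if (r : ℕ) % 2 = 0 then k j ^ (r : ℕ) * v j else k j ^ (r : ℕ) * u j)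
          (Matrix.of fun r j : Fin n =>
            if (r : ℕ) % 2 = 0 then l j ^ (r : ℕ) * y j else l j ^ (r : ℕ) * x j)).det := by
  classical
  rcases Nat.eq_zero_or_pos n with hn | hn
  · subst hn
    simp [Matrix.det_isEmpty]
  by_cases hz : ∃ i, u i = 0 ∧ v i = 0
  · obtain ⟨i, hu, hv⟩ := hz
    have hL : (Matrix.of fun i j : Fin n => (u i * y j - v i * x j) / (l j - k i)).det = 0 :=
      Matrix.det_eq_zero_of_row_eq_zero i fun j => by simp [hu, hv]
    have hR := Matrix.det_eq_zero_of_column_eq_zero (A := (Matrix.fromBlocks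
          (Matrix.of fun r j : Fin n =>
            if (r : ℕ) % 2 = 0 then k j ^ (r : ℕ) * u j else k j ^ (r : ℕ) * v j)
          (Matrix.of fun r j : Fin n =>
            if (r : ℕ) % 2 = 0 then l j ^ (r : ℕ) * x j else l j ^ (r : ℕ) * y j)
          (Matrix.of fun r j : Fin n =>
            if (r : ℕ) % 2 = 0 then k j ^ (r : ℕ) * v j else k j ^ (r : ℕ) * u j)
          (Matrix.of fun r j : Fin n =>
            if (r : ℕ) % 2 = 0 then l j ^ (r : ℕ) * y j else l j ^ (r : ℕ) * x j)))
      (Sum.inl i) (fun r => by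
        rcases r with r | r <;> simp [hu, hv, Matrix.fromBlocks])
    rw [hL, hR, mul_zero]
  · push_neg at hz
    have huv : ∀ i, u i ≠ 0 ∨ v i ≠ 0 := by
      intro i
      rcases eq_or_ne (u i) 0 with h | h
      · exact Or.inr (hz i h)
      · exact Or.inl h
    have hkey := okada_key hn u v k x y l hk huv
    rw [hkey]
    have hE : (Matrix.of fun i j : Fin n =>
          (u i * y j - v i * x j) * ∏ m ∈ Finset.univ.erase i, (l j - k m))
        = (Matrix.of fun i j : Fin n => (u i * y j - v i * x j) / (l j - k i))
          * Matrix.diagonal (fun j => ∏ i, (l j - k i)) := by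
      ext i j
      rw [Matrix.mul_diagonal]
      have hne : l j - k i ≠ 0 := sub_ne_zero.mpr (hkl i j)
      rw [← Finset.mul_prod_erase Finset.univ (fun m => l j - k m) (Finset.mem_univ i)]
      simp only [Matrix.of_apply]
      field_simp
    rw [hE, Matrix.det_mul, Matrix.det_diagonal]
    have hP : (∏ i, ∏ j, (l j - k i)) = ∏ j, ∏ i : Fin n, (l j - k i) := Finset.prod_comm
    have hPne : (∏ j, ∏ i : Fin n, (l j - k i)) ≠ 0 :=
      Finset.prod_ne_zero_iff.mpr fun j _ =>
        Finset.prod_ne_zero_iff.mpr fun i _ => sub_ne_zero.mpr (hkl i j)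
    rw [hP, inv_mul_eq_div, eq_div_iff hPne]
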